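/- Let f : ℝ^d → ℝ^d be measurable and locally bounded. Then the graph {(x, z) ∈ ℝ^d × ℝ^d : z ∈ F_f(x)} of the Filippov set-valued map F_f is a closed subset of ℝ^d × ℝ^d (i.e., F_f is upper semicontinuous). -/
import Mathlib


open MeasureTheory Filter Topology Metric Set
open scoped RealInnerProductSpace

noncomputable section

abbrev Euc (d : ℕ) := EuclideanSpace ℝ (Fin d)

/-- `f` is locally bounded. -/
def LocallyBounded {d : ℕ} (f : Euc d → Euc d) : Prop :=
  ∀ x : Euc d, ∃ r > 0, ∃ C, ∀ y, ‖y - x‖ < r → ‖f y‖ ≤ C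

/-- Filippov set-valued map: intersection over Lebesgue-null sets `N` and radii `δ > 0`
of the closed convex hull of `{f y : ‖y - x‖ < δ, y ∉ N}`. -/
def Filippov {d : ℕ} (f : Euc d → Euc d) (x : Euc d) : Set (Euc d) :=
  ⋂ (N : Set (Euc d)) (_ : volume N = 0) (δ : ℝ) (_ : 0 < δ),
    closure (convexHull ℝ (f '' {y | ‖y - x‖ < δ ∧ y ∉ N}))

/-- Krasovskii set-valued map: intersection over radii `δ > 0` of the closed convex hull
of `{f y : ‖y - x‖ < δ}`. -/
def Krasovskii {d : ℕ} (f : Euc d → Euc d) (x : Euc d) : Set (Euc d) :=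
  ⋂ (δ : ℝ) (_ : 0 < δ), closure (convexHull ℝ (f '' {y | ‖y - x‖ < δ}))

/-- the graph of `F_f` is closed (upper semicontinuity). -/
theorem stmt_7 {d : ℕ} (f : Euc d → Euc d) (hf_meas : Measurable f)
    (hf_bdd : LocallyBounded f) :
    IsClosed {p : Euc d × Euc d | p.2 ∈ Filippov f p.1} := by
  apply IsSeqClosed.isClosed
  intro u p hu hup
  simp only [Filippov, Set.mem_setOf_eq, Set.mem_iInter] at hu ⊢
  intro N hN δ hδ
  have h1 : Tendsto (fun n => (u n).1) atTop (𝓝 p.1) :=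
    (continuous_fst.tendsto p).comp hup
  have h2 : Tendsto (fun n => (u n).2) atTop (𝓝 p.2) :=
    (continuous_snd.tendsto p).comp hup
  have hev : ∀ᶠ n in atTop, dist (u n).1 p.1 < δ / 2 :=
    h1 (Metric.ball_mem_nhds p.1 (by linarith))
  refine isClosed_closure.mem_of_tendsto h2 ?_
  filter_upwards [hev] with n hn
  have hsub : {y | ‖y - (u n).1‖ < δ / 2 ∧ y ∉ N} ⊆ {y | ‖y - p.1‖ < δ ∧ y ∉ N} := by
    rintro y ⟨hy1, hy2⟩
    refine ⟨?_, hy2⟩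
    have : ‖y - p.1‖ ≤ ‖y - (u n).1‖ + ‖(u n).1 - p.1‖ := norm_sub_le_norm_sub_add_norm_sub y (u n).1 p.1
    rw [dist_eq_norm] at hn
    linarith
  exact closure_mono (convexHull_mono (Set.image_mono hsub)) (hu n N hN (δ / 2) (by linarith))
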